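/- Let x_1, …, x_n ∈ ℝ^{2n} be linearly independent vectors spanning a Lagrangian subspace, i.e. x_iᵀ J x_j = 0 for all i, j, and let Ĥ := X_R X_L⁺ + Jᵀ (X_R X_L⁺)ᵀ J. Then ‖Ĥ‖_F ≤ ‖H‖_F for every skew-Hamiltonian matrix H ∈ ℝ^{2n×2n} satisfying H x_k = x_{k+1} for all k = 1, …, n-1. -/
import Mathlib


open Matrix

noncomputable section

/-- The canonical skew-symmetric matrix `J = [[0, I],[-I, 0]]`. -/
def Jmat (n : ℕ) : Matrix (Fin n ⊕ Fin n) (Fin n ⊕ Fin n) ℝ :=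
  Matrix.fromBlocks 0 1 (-1) 0

/-- A matrix `H` is skew-Hamiltonian if `Jᵀ Hᵀ J = H`. -/
def IsSkewHamiltonian {n : ℕ} (H : Matrix (Fin n ⊕ Fin n) (Fin n ⊕ Fin n) ℝ) : Prop :=
  (Jmat n)ᵀ * Hᵀ * Jmat n = H

/-- `X_L = [x_1 ⋯ x_{n-1}]`. -/
def XL {n : ℕ} (x : Fin n → (Fin n ⊕ Fin n) → ℝ) :
    Matrix (Fin n ⊕ Fin n) (Fin (n - 1)) ℝ :=
  Matrix.of fun i j => x ⟨j.1, lt_of_lt_of_le j.2 (Nat.sub_le n 1)⟩ i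

/-- `X_R = [x_2 ⋯ x_n]`. -/
def XR {n : ℕ} (x : Fin n → (Fin n ⊕ Fin n) → ℝ) :
    Matrix (Fin n ⊕ Fin n) (Fin (n - 1)) ℝ :=
  Matrix.of fun i j => x ⟨j.1 + 1, by have := j.2; omega⟩ i

/-- The Moore–Penrose pseudoinverse `X_L⁺ = (X_Lᵀ X_L)⁻¹ X_Lᵀ` of `X_L`
(for `X_L` with linearly independent columns). -/
def XLpinv {n : ℕ} (x : Fin n → (Fin n ⊕ Fin n) → ℝ) :
    Matrix (Fin (n - 1)) (Fin n ⊕ Fin n) ℝ :=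
  ((XL x)ᵀ * XL x)⁻¹ * (XL x)ᵀ

/-- `Ĥ = X_R X_L⁺ + Jᵀ (X_R X_L⁺)ᵀ J`. -/
def Hhat {n : ℕ} (x : Fin n → (Fin n ⊕ Fin n) → ℝ) :
    Matrix (Fin n ⊕ Fin n) (Fin n ⊕ Fin n) ℝ :=
  XR x * XLpinv x + (Jmat n)ᵀ * (XR x * XLpinv x)ᵀ * Jmat n

/-- `H` realizes the Krylov relations `H x_k = x_{k+1}`, `k = 1, …, n-1`. -/
def KrylovRel {n : ℕ} (H : Matrix (Fin n ⊕ Fin n) (Fin n ⊕ Fin n) ℝ)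
    (x : Fin n → (Fin n ⊕ Fin n) → ℝ) : Prop :=
  ∀ k : Fin (n - 1), H *ᵥ x ⟨k.1, lt_of_lt_of_le k.2 (Nat.sub_le n 1)⟩
    = x ⟨k.1 + 1, by have := k.2; omega⟩

/-- The Frobenius norm of a real matrix. -/
def frobNorm {m m' : Type*} [Fintype m] [Fintype m'] (M : Matrix m m' ℝ) : ℝ :=
  Real.sqrt (∑ i, ∑ j, (M i j) ^ 2)

/-- The Frobenius inner product of two real matrices. -/
def ip {ι κ : Type*} [Fintype ι] [Fintype κ] (A B : Matrix ι κ ℝ) : ℝ :=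
  Matrix.trace (Aᵀ * B)

lemma ip_eq_sum {ι κ : Type*} [Fintype ι] [Fintype κ] (A B : Matrix ι κ ℝ) :
    ip A B = ∑ i, ∑ j, A i j * B i j := by
  rw [ip, Matrix.trace]
  simp only [Matrix.diag, Matrix.mul_apply, Matrix.transpose_apply]
  exact Finset.sum_comm

lemma ip_self_nonneg {ι κ : Type*} [Fintype ι] [Fintype κ] (A : Matrix ι κ ℝ) :
    0 ≤ ip A A := by
  rw [ip_eq_sum]
  exact Finset.sum_nonneg fun i _ => Finset.sum_nonneg fun j _ => mul_self_nonneg _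

lemma ip_comm {ι κ : Type*} [Fintype ι] [Fintype κ] (A B : Matrix ι κ ℝ) :
    ip A B = ip B A := by
  rw [ip, ip, ← Matrix.trace_transpose, Matrix.transpose_mul, Matrix.transpose_transpose]

lemma ip_add_left {ι κ : Type*} [Fintype ι] [Fintype κ] (A B C : Matrix ι κ ℝ) :
    ip (A + B) C = ip A C + ip B C := by
  simp [ip, Matrix.transpose_add, Matrix.add_mul]

lemma ip_add_right {ι κ : Type*} [Fintype ι] [Fintype κ] (A B C : Matrix ι κ ℝ) :
    ip A (B + C) = ip A B + ip A C := by
  simp [ip, Matrix.mul_add]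

lemma frobNorm_eq_ip {m m' : Type*} [Fintype m] [Fintype m'] (M : Matrix m m' ℝ) :
    frobNorm M = Real.sqrt (ip M M) := by
  rw [frobNorm, ip_eq_sum]
  simp [sq]

/-- The abstract Frobenius-norm inequality for `H P + Q H` with projectors `P`, `Q`
satisfying `Q H P = 0`. -/
lemma ip_ineq {m : Type*} [Fintype m] [DecidableEq m] (H P Q : Matrix m m ℝ)
    (hPP : P * P = P) (hPT : Pᵀ = P) (hQQ : Q * Q = Q) (hQT : Qᵀ = Q)
    (hQHP : Q * (H * P) = 0) :
    ip (H * P + Q * H) (H * P + Q * H) ≤ ip H H := by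
  set R : Matrix m m ℝ := (1 - Q) * H * (1 - P) with hR
  have hsplit : H = (H * P + Q * H) + R := by
    have h1 : R = H - H * P - Q * H + Q * (H * P) := by rw [hR]; noncomm_ring
    rw [h1, hQHP]; abel
  have h1 : ip (H * P) R = 0 := by
    rw [ip, Matrix.transpose_mul, hPT,
      show (P * Hᵀ) * R = (P * Hᵀ * ((1 - Q) * H)) * (1 - P) from by rw [hR]; noncomm_ring,
      Matrix.trace_mul_comm,
      show (1 - P) * (P * Hᵀ * ((1 - Q) * H)) = ((1 - P) * P) * (Hᵀ * ((1 - Q) * H)) from by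
        noncomm_ring,
      show (1 - P) * P = 0 from by rw [Matrix.sub_mul, Matrix.one_mul, hPP, sub_self],
      Matrix.zero_mul, Matrix.trace_zero]
  have h2 : ip (Q * H) R = 0 := by
    rw [ip, Matrix.transpose_mul, hQT,
      show (Hᵀ * Q) * R = Hᵀ * ((Q * (1 - Q)) * (H * (1 - P))) from by rw [hR]; noncomm_ring,
      show Q * (1 - Q) = 0 from by rw [Matrix.mul_sub, Matrix.mul_one, hQQ, sub_self],
      Matrix.zero_mul, Matrix.mul_zero, Matrix.trace_zero]
  have hSR : ip (H * P + Q * H) R = 0 := by rw [ip_add_left, h1, h2, add_zero]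
  have expand : ip H H = ip (H * P + Q * H) (H * P + Q * H) + ip R R := by
    conv_lhs => rw [hsplit]
    rw [ip_add_left, ip_add_right, ip_add_right, hSR, ip_add_right R,
      ip_comm R (H * P + Q * H), hSR]
    ring
  have := ip_self_nonneg R
  linarith

/-- `Ĥ` has minimal Frobenius norm among all skew-Hamiltonian matrices realizing the
Krylov relations `H x_k = x_{k+1}`. -/
theorem Hhat_min_frobenius {n : ℕ} (x : Fin n → (Fin n ⊕ Fin n) → ℝ)
    (hLI : LinearIndependent ℝ x)
    (hLag : ∀ i j : Fin n, x i ⬝ᵥ (Jmat n *ᵥ x j) = 0)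
    (H : Matrix (Fin n ⊕ Fin n) (Fin n ⊕ Fin n) ℝ)
    (hH : IsSkewHamiltonian H) (hK : KrylovRel H x) :
    frobNorm (Hhat x) ≤ frobNorm H := by
  -- Notation
  set J := Jmat n with hJdef
  -- J is orthogonal
  have hJJ' : J * Jᵀ = 1 := by
    simp only [hJdef, Jmat, Matrix.fromBlocks_transpose, Matrix.fromBlocks_multiply]
    simp [← Matrix.fromBlocks_one]
  -- skew-Hamiltonian identity:  J H = Hᵀ J
  have hJH : J * H = Hᵀ * J := by
    conv_lhs => rw [← hH]
    rw [← Matrix.mul_assoc, ← Matrix.mul_assoc, hJJ', Matrix.one_mul]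
  -- Krylov relations in matrix form
  have hHXL : H * XL x = XR x := by
    ext i j
    have h := congrFun (hK j) i
    simpa [Matrix.mul_apply, Matrix.mulVec, dotProduct, XL, XR] using h
  -- Lagrangian condition in matrix form
  have hLagM : (XL x)ᵀ * (J * XR x) = 0 := by
    ext a b
    have h := hLag ⟨a.1, lt_of_lt_of_le a.2 (Nat.sub_le n 1)⟩ ⟨b.1 + 1, by have := b.2; omega⟩
    simpa [Matrix.mul_apply, Matrix.mulVec, dotProduct, XL, XR, Matrix.transpose_apply,
      Finset.mul_sum] using h
  -- invertibility of the Gram matrix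
  have hGi : ((XL x)ᵀ * XL x)⁻¹ * ((XL x)ᵀ * XL x) = 1 := by
    have hLI' : LinearIndependent ℝ (fun j : Fin (n-1) =>
        x ⟨j.1, lt_of_lt_of_le j.2 (Nat.sub_le n 1)⟩) := by
      apply hLI.comp
      intro a b hab
      simpa [Fin.ext_iff] using congrArg Fin.val hab
    have hker : ∀ v : Fin (n-1) → ℝ, XL x *ᵥ v = 0 → v = 0 := by
      intro v hv
      have h1 : ∑ j, v j • (fun j : Fin (n-1) =>
          x ⟨j.1, lt_of_lt_of_le j.2 (Nat.sub_le n 1)⟩) j = 0 := by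
        funext i
        have := congrFun hv i
        simpa [Matrix.mulVec, dotProduct, XL, Finset.sum_apply, mul_comm] using this
      funext j
      exact Fintype.linearIndependent_iff.mp hLI' v h1 j
    have hGker : ∀ v : Fin (n-1) → ℝ, ((XL x)ᵀ * XL x) *ᵥ v = 0 → v = 0 := by
      intro v hv
      apply hker
      have h1 : (XL x *ᵥ v) ⬝ᵥ (XL x *ᵥ v) = 0 := by
        have h2 : v ⬝ᵥ (((XL x)ᵀ * XL x) *ᵥ v) = 0 := by rw [hv, dotProduct_zero]
        rwa [← Matrix.mulVec_mulVec, Matrix.dotProduct_mulVec, Matrix.vecMul_transpose] at h2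
      exact (dotProduct_self_eq_zero).mp h1
    have hinj : Function.Injective (((XL x)ᵀ * XL x).mulVec) := by
      intro u w huw
      have := hGker (u - w) (by rw [Matrix.mulVec_sub, huw, sub_self])
      exact sub_eq_zero.mp this
    exact Matrix.nonsing_inv_mul _ ((Matrix.isUnit_iff_isUnit_det _).mp
      (Matrix.mulVec_injective_iff_isUnit.mp hinj))
  -- the orthogonal projector P onto the range of XL
  set P : Matrix (Fin n ⊕ Fin n) (Fin n ⊕ Fin n) ℝ := XL x * XLpinv x with hPdef
  have hPiL : XLpinv x * XL x = 1 := by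
    rw [XLpinv, Matrix.mul_assoc]
    exact hGi
  have hPP : P * P = P := by
    rw [hPdef, Matrix.mul_assoc, ← Matrix.mul_assoc (XLpinv x), hPiL, Matrix.one_mul]
  have hGT : ((XL x)ᵀ * XL x)ᵀ = (XL x)ᵀ * XL x := by
    rw [Matrix.transpose_mul, Matrix.transpose_transpose]
  have hPT : Pᵀ = P := by
    rw [hPdef, XLpinv, Matrix.transpose_mul, Matrix.transpose_mul,
      Matrix.transpose_nonsing_inv, hGT, Matrix.transpose_transpose,
      Matrix.mul_assoc]
  -- the projector Q = Jᵀ P J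
  set Q : Matrix (Fin n ⊕ Fin n) (Fin n ⊕ Fin n) ℝ := Jᵀ * P * J with hQdef
  have hQT : Qᵀ = Q := by
    rw [hQdef, Matrix.transpose_mul, Matrix.transpose_mul, hPT, Matrix.transpose_transpose,
      Matrix.mul_assoc, hPdef]
    simp only [Matrix.mul_assoc]
  have hQQ : Q * Q = Q := by
    rw [hQdef]
    calc (Jᵀ * P * J) * (Jᵀ * P * J) = Jᵀ * P * ((J * Jᵀ) * (P * J)) := by
          simp only [Matrix.mul_assoc]
      _ = Jᵀ * P * (P * J) := by rw [hJJ', Matrix.one_mul]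
      _ = Jᵀ * ((P * P) * J) := by simp only [Matrix.mul_assoc]
      _ = Jᵀ * P * J := by rw [hPP, hPdef]; simp only [Matrix.mul_assoc]
  -- H P = XR XL⁺
  have hHP : H * P = XR x * XLpinv x := by
    rw [hPdef, ← Matrix.mul_assoc, hHXL]
  -- Q H P = 0 (Lagrangian condition)
  have hPJR : P * (J * XR x) = 0 := by
    rw [hPdef, XLpinv]
    calc XL x * (((XL x)ᵀ * XL x)⁻¹ * (XL x)ᵀ) * (J * XR x)
        = XL x * (((XL x)ᵀ * XL x)⁻¹ * ((XL x)ᵀ * (J * XR x))) := by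
          simp only [Matrix.mul_assoc]
      _ = 0 := by rw [hLagM, Matrix.mul_zero, Matrix.mul_zero]
  have hQHP : Q * (H * P) = 0 := by
    rw [hQdef, hHP]
    calc (Jᵀ * P * J) * (XR x * XLpinv x)
        = Jᵀ * ((P * (J * XR x)) * XLpinv x) := by simp only [Matrix.mul_assoc]
      _ = 0 := by rw [hPJR, Matrix.zero_mul, Matrix.mul_zero]
  -- Hhat = H P + Q H
  have hHhat : Hhat x = H * P + Q * H := by
    rw [Hhat, ← hJdef, ← hHP]
    congr 1
    rw [hQdef]
    calc Jᵀ * (H * P)ᵀ * J = Jᵀ * (P * (Hᵀ * J)) := by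
          rw [Matrix.transpose_mul, hPT]; simp only [Matrix.mul_assoc]
      _ = Jᵀ * (P * (J * H)) := by rw [hJH]
      _ = Jᵀ * P * J * H := by simp only [Matrix.mul_assoc]
  -- conclude
  rw [frobNorm_eq_ip, frobNorm_eq_ip, hHhat]
  exact Real.sqrt_le_sqrt (ip_ineq H P Q hPP hPT hQQ hQT hQHP)
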